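/- Let (a_k) and (b_k) be finitely supported complex sequences such that ∑_k b_k·conj(b_{k−j})·e^{2πikt} = ∑_k a_k·conj(a_{k−j})·e^{2πikt} for every t ∈ ℝ and every j ∈ ℤ, and suppose (a_k) is not identically zero. Then there exists c ∈ ℂ with |c| = 1 such that b_k = c·a_k for all k ∈ ℤ. -/

import Mathlib

open Complex Polynomial

/-- A trigonometric polynomial that vanishes identically has zero coefficients. -/
lemma trig_poly_zero (f : ℤ → ℂ) (hf : (Function.support f).Finite)
    (h : ∀ t : ℝ, ∑ᶠ k : ℤ, f k * Complex.exp (2 * (Real.pi : ℂ) * Complex.I * (k : ℂ) * (t : ℂ)) = 0) :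
    ∀ k, f k = 0 := by
  classical
  set s := hf.toFinset with hs
  set M : ℤ := ((s.sup fun k => (-k).toNat : ℕ) : ℤ) with hM
  have hnn : ∀ k ∈ s, 0 ≤ k + M := by
    intro k hk
    have h1 : ((-k).toNat : ℤ) ≤ M := by
      rw [hM]; exact_mod_cast Finset.le_sup (f := fun k => (-k).toNat) hk
    have h2 : -k ≤ ((-k).toNat : ℤ) := Int.self_le_toNat _
    omega
  set P : Polynomial ℂ := ∑ k ∈ s, Polynomial.C (f k) * Polynomial.X ^ (k + M).toNat with hP
  -- evaluation
  have heval : ∀ t : ℝ, P.eval (Complex.exp (2 * (Real.pi : ℂ) * Complex.I * (t : ℂ))) = 0 := by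
    intro t
    set z := Complex.exp (2 * (Real.pi : ℂ) * Complex.I * (t : ℂ)) with hz
    have hzne : z ≠ 0 := Complex.exp_ne_zero _
    have h0 := h t
    rw [finsum_eq_sum_of_support_subset _ (s := s) (by
      intro k hk
      have : f k ≠ 0 := by
        intro h'; simp [h'] at hk
      simpa [hs] using this)] at h0
    have : P.eval z = z ^ M * ∑ k ∈ s, f k * Complex.exp (2 * (Real.pi : ℂ) * Complex.I * (k : ℂ) * (t : ℂ)) := by
      rw [hP, Polynomial.eval_finset_sum, Finset.mul_sum]
      apply Finset.sum_congr rfl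
      intro k hk
      have e1 : (z : ℂ) ^ (k + M).toNat = z ^ (k + M) := by
        rw [← zpow_natCast, Int.toNat_of_nonneg (hnn k hk)]
      have e2 : Complex.exp (2 * (Real.pi : ℂ) * Complex.I * (k : ℂ) * (t : ℂ)) = z ^ k := by
        rw [hz, ← Complex.exp_int_mul]
        ring_nf
      simp only [Polynomial.eval_mul, Polynomial.eval_pow, Polynomial.eval_C, Polynomial.eval_X]
      rw [e1, e2, zpow_add₀ hzne]
      ring
    rw [this, h0, mul_zero]
  -- P has infinitely many roots
  have hPzero : P = 0 := by
    apply Polynomial.eq_zero_of_infinite_isRoot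
    have hinj : Set.InjOn (fun t : ℝ => Complex.exp (2 * (Real.pi : ℂ) * Complex.I * (t : ℂ))) (Set.Ioo (0:ℝ) 1) := by
      intro a ha b hb hab
      simp only at hab
      rw [Complex.exp_eq_exp_iff_exists_int] at hab
      obtain ⟨n, hn⟩ := hab
      have h2 : (2 * (Real.pi : ℂ) * Complex.I) ≠ 0 := by
        simp [Real.pi_ne_zero, Complex.I_ne_zero, Complex.ofReal_ne_zero]
      have : (a : ℂ) = (b : ℂ) + (n : ℂ) := by
        have key : ((a : ℂ)) * (2 * (Real.pi : ℂ) * Complex.I) = ((b : ℂ) + (n : ℂ)) * (2 * (Real.pi : ℂ) * Complex.I) := by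
          linear_combination hn
        exact mul_right_cancel₀ h2 key
      have h3 : a = b + (n : ℝ) := by exact_mod_cast this
      have : n = 0 := by
        rcases ha with ⟨ha1, ha2⟩; rcases hb with ⟨hb1, hb2⟩
        have : (n : ℝ) = a - b := by linarith
        have h4 : (-1 : ℝ) < n := by rw [this]; linarith
        have h5 : (n : ℝ) < 1 := by rw [this]; linarith
        exact_mod_cast by
          have : (-1 : ℤ) < n := by exact_mod_cast h4
          have : n < 1 := by exact_mod_cast h5
          omega
      simp [this] at h3; exact h3
    have hsub : (fun t : ℝ => Complex.exp (2 * (Real.pi : ℂ) * Complex.I * (t : ℂ))) '' (Set.Ioo 0 1) ⊆ {x | P.IsRoot x} := by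
      rintro x ⟨t, _, rfl⟩
      exact heval t
    exact Set.Infinite.mono hsub ((Set.infinite_image_iff hinj).mpr (Set.Ioo_infinite one_pos))
  -- conclude coefficients vanish
  intro k
  by_contra hk
  have hks : k ∈ s := by simpa [hs] using hk
  have : P.coeff ((k + M).toNat) = f k := by
    rw [hP, Polynomial.finset_sum_coeff]
    rw [Finset.sum_eq_single k]
    · simp
    · intro b hb hbk
      have : (b + M).toNat ≠ (k + M).toNat := by
        intro he
        apply hbk
        have := hnn b hb; have := hnn k hks
        omega
      simp [Polynomial.coeff_C_mul, Polynomial.coeff_X_pow, Ne.symm this]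
    · intro h'; exact absurd hks h'
  rw [hPzero] at this
  simp at this
  exact hk this.symm

/-- If two finitely supported sequences have all their autocorrelation trigonometric
polynomials equal, then they differ by a unimodular constant. -/
theorem autocorrelation_determines (A B : ℤ → ℂ)
    (hA : (Function.support A).Finite) (hB : (Function.support B).Finite)
    (hA0 : A ≠ 0)
    (h : ∀ (j : ℤ) (t : ℝ),
      (∑ᶠ k : ℤ, B k * (starRingEnd ℂ) (B (k - j)) *
          Complex.exp (2 * (Real.pi : ℂ) * Complex.I * (k : ℂ) * (t : ℂ)))
        = ∑ᶠ k : ℤ, A k * (starRingEnd ℂ) (A (k - j)) *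
          Complex.exp (2 * (Real.pi : ℂ) * Complex.I * (k : ℂ) * (t : ℂ))) :
    ∃ c : ℂ, ‖c‖ = 1 ∧ ∀ k : ℤ, B k = c * A k := by
  classical
  -- Step 1: coefficient equality
  have hcoef : ∀ (j k : ℤ), B k * (starRingEnd ℂ) (B (k - j)) = A k * (starRingEnd ℂ) (A (k - j)) := by
    intro j k
    set f : ℤ → ℂ := fun k => B k * (starRingEnd ℂ) (B (k - j)) - A k * (starRingEnd ℂ) (A (k - j)) with hf
    have hfsupp : (Function.support f).Finite := by
      apply Set.Finite.subset (hB.union hA)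
      intro x hx
      simp only [Function.mem_support, hf] at hx
      by_contra hc
      simp only [Set.mem_union, Function.mem_support, not_or, not_not] at hc
      simp [hc.1, hc.2] at hx
    have hz : ∀ t : ℝ, ∑ᶠ k : ℤ, f k * Complex.exp (2 * (Real.pi : ℂ) * Complex.I * (k : ℂ) * (t : ℂ)) = 0 := by
      intro t
      have hs1 : (Function.support fun k : ℤ => B k * (starRingEnd ℂ) (B (k - j)) *
          Complex.exp (2 * (Real.pi : ℂ) * Complex.I * (k : ℂ) * (t : ℂ))).Finite := by
        apply Set.Finite.subset hB
        intro x hx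
        simp only [Function.mem_support] at hx ⊢
        intro hc; simp [hc] at hx
      have hs2 : (Function.support fun k : ℤ => A k * (starRingEnd ℂ) (A (k - j)) *
          Complex.exp (2 * (Real.pi : ℂ) * Complex.I * (k : ℂ) * (t : ℂ))).Finite := by
        apply Set.Finite.subset hA
        intro x hx
        simp only [Function.mem_support] at hx ⊢
        intro hc; simp [hc] at hx
      calc ∑ᶠ k : ℤ, f k * Complex.exp (2 * (Real.pi : ℂ) * Complex.I * (k : ℂ) * (t : ℂ))
          = ∑ᶠ k : ℤ, (B k * (starRingEnd ℂ) (B (k - j)) *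
              Complex.exp (2 * (Real.pi : ℂ) * Complex.I * (k : ℂ) * (t : ℂ))
            - A k * (starRingEnd ℂ) (A (k - j)) *
              Complex.exp (2 * (Real.pi : ℂ) * Complex.I * (k : ℂ) * (t : ℂ))) := by
            apply finsum_congr; intro k; rw [hf]; ring
        _ = _ - _ := finsum_sub_distrib hs1 hs2
        _ = 0 := by rw [h j t, sub_self]
    have := trig_poly_zero f hfsupp hz k
    exact sub_eq_zero.mp this
  -- Step 2: pick k0 with A k0 ≠ 0
  obtain ⟨k0, hk0⟩ : ∃ k0, A k0 ≠ 0 := by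
    by_contra hc
    push_neg at hc
    exact hA0 (funext fun k => hc k)
  have hBk0 : B k0 ≠ 0 := by
    have := hcoef 0 k0
    simp only [sub_zero] at this
    rw [Complex.mul_conj, Complex.mul_conj] at this
    intro hc
    rw [hc] at this
    simp only [Complex.normSq_zero, Complex.ofReal_zero] at this
    have h2 : Complex.normSq (A k0) = 0 := by exact_mod_cast this.symm
    exact hk0 (Complex.normSq_eq_zero.mp h2)
  refine ⟨B k0 / A k0, ?_, ?_⟩
  · have := hcoef 0 k0
    simp only [sub_zero] at this
    rw [Complex.mul_conj, Complex.mul_conj] at this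
    have hnorm : ‖B k0‖ = ‖A k0‖ := by
      have h2 : Complex.normSq (B k0) = Complex.normSq (A k0) := by exact_mod_cast this
      rw [Complex.norm_def, Complex.norm_def, h2]
    rw [norm_div, hnorm, div_self]
    simpa using hk0
  · intro m
    have hm := hcoef (k0 - m) k0
    simp only [sub_sub_cancel] at hm
    have hconj := congrArg (starRingEnd ℂ) hm
    simp only [map_mul, Complex.conj_conj] at hconj
    -- hconj : conj (B k0) * B m = conj (A k0) * A m
    have hb0 : (starRingEnd ℂ) (B k0) ≠ 0 := by simpa using hBk0
    have hnormeq := hcoef 0 k0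
    simp only [sub_zero] at hnormeq
    -- B k0 * conj (B k0) = A k0 * conj (A k0)
    field_simp
    -- goal: B m * A k0 = B k0 * A m  (or similar)
    have : B m = (starRingEnd ℂ) (A k0) / (starRingEnd ℂ) (B k0) * A m := by
      field_simp at hconj ⊢
      linear_combination hconj
    rw [this]
    have hratio : (starRingEnd ℂ) (A k0) * A k0 = (starRingEnd ℂ) (B k0) * B k0 := by
      linear_combination -hnormeq
    field_simp
    linear_combination A m * hratio
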